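/- For every real C > 1 and every p ∈ (0, 1/2) there exist constants K > 0, D₀ and ℓ₀, depending only on p and C, with the following property. Let D ≥ D₀ and ℓ ≥ ℓ₀ be integers, d = D²ℓ², and let k ≤ Cℓ be a positive integer. Let m ≥ 0 be an integer, let v, v_1, …, v_k ∈ ℝ^m be fixed vectors with ‖v‖₂ ≤ α√ℓ/√d and ‖v_i‖₂ ≤ α√ℓ/√d for all i, let m₀ ∈ (1−2δ, 1+δ) be fixed, and let Z_1, …, Z_k be i.i.d. N(0, 1/d). Then: P[ m₀·Z_i + ⟨v_i, v⟩ ≥ −c_p/√d for all 1 ≤ i ≤ k ] ≤ (1−p)^k · exp( (a√d/(1−p))·Σ_{i=1}^k ⟨v_i, v⟩ + K·k·δ ), and P[ m₀·Z_i + ⟨v_i, v⟩ < −c_p/√d for all 1 ≤ i ≤ k ] ≤ p^k · exp( −(a√d/p)·Σ_{i=1}^k ⟨v_i, v⟩ + K·k·δ ). -/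

import Mathlib

open MeasureTheory ProbabilityTheory

/-- CDF of the standard normal distribution `N(0,1)`. -/
noncomputable def stdNormalCDF (t : ℝ) : ℝ :=
  (gaussianReal 0 1 (Set.Iic t)).toReal

/-- Density of the standard normal distribution `N(0,1)`. -/
noncomputable def stdNormalPDF (t : ℝ) : ℝ :=
  Real.exp (-t ^ 2 / 2) / Real.sqrt (2 * Real.pi)

open Real Set

namespace Stmt17Aux

lemma pdf_eq (x : ℝ) : gaussianPDFReal 0 1 x = stdNormalPDF x := by
  simp only [gaussianPDFReal, stdNormalPDF, NNReal.coe_one, mul_one, sub_zero]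
  exact (div_eq_inv_mul _ _).symm

lemma sqrt_two_pi_pos : 0 < Real.sqrt (2 * Real.pi) :=
  Real.sqrt_pos.2 (by positivity)

lemma pdf_pos (x : ℝ) : 0 < stdNormalPDF x :=
  div_pos (Real.exp_pos _) sqrt_two_pi_pos

lemma two_le_sqrt_two_pi : (2:ℝ) ≤ Real.sqrt (2 * Real.pi) := by
  nlinarith [Real.sq_sqrt (show (0:ℝ) ≤ 2 * Real.pi by positivity),
    Real.sqrt_nonneg (2 * Real.pi), Real.pi_gt_three]

lemma pdf_le_half (x : ℝ) : stdNormalPDF x ≤ 2⁻¹ := by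
  rw [stdNormalPDF]
  have h1 : Real.exp (-x ^ 2 / 2) ≤ 1 := Real.exp_le_one_iff.2 (by nlinarith [sq_nonneg x])
  have h2 := two_le_sqrt_two_pi
  have h3 := sqrt_two_pi_pos
  rw [div_le_iff₀ h3]
  nlinarith

lemma pdf_continuous : Continuous stdNormalPDF := by
  unfold stdNormalPDF
  fun_prop

lemma pdf_mul_exp (c u : ℝ) :
    stdNormalPDF c * Real.exp u = Real.exp (-c ^ 2 / 2 + u) / Real.sqrt (2 * Real.pi) := by
  rw [stdNormalPDF, Real.exp_add, div_mul_eq_mul_div]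

lemma pdf_le_pdf_mul_exp {c t u : ℝ} (h : -t ^ 2 / 2 ≤ -c ^ 2 / 2 + u) :
    stdNormalPDF t ≤ stdNormalPDF c * Real.exp u := by
  rw [pdf_mul_exp, stdNormalPDF]
  gcongr

lemma pdf_mul_exp_le_pdf {c t u : ℝ} (h : -c ^ 2 / 2 + u ≤ -t ^ 2 / 2) :
    stdNormalPDF c * Real.exp u ≤ stdNormalPDF t := by
  rw [pdf_mul_exp, stdNormalPDF]
  gcongr

lemma pdf_integrable : Integrable stdNormalPDF := by
  have h := integrable_gaussianPDFReal 0 1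
  simpa [funext pdf_eq] using h

lemma cdf_eq_integral (t : ℝ) : stdNormalCDF t = ∫ x in Iic t, stdNormalPDF x := by
  rw [stdNormalCDF, gaussianReal_apply_eq_integral 0 one_ne_zero]
  simp only [pdf_eq]
  rw [ENNReal.toReal_ofReal]
  exact setIntegral_nonneg measurableSet_Iic fun x _ => (pdf_pos x).le

lemma integral_pdf_total : ∫ x, stdNormalPDF x = 1 := by
  have h := integral_gaussianPDFReal_eq_one 0 (v := 1) one_ne_zero
  simpa [funext pdf_eq] using h

lemma cdf_sub (a b : ℝ) : stdNormalCDF b - stdNormalCDF a = ∫ x in a..b, stdNormalPDF x := by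
  rw [cdf_eq_integral, cdf_eq_integral]
  exact intervalIntegral.integral_Iic_sub_Iic pdf_integrable.integrableOn pdf_integrable.integrableOn

lemma cdf_neg (t : ℝ) : stdNormalCDF (-t) = 1 - stdNormalCDF t := by
  have h1 : stdNormalCDF (-t) = ∫ x in Ioi t, stdNormalPDF x := by
    rw [cdf_eq_integral, ← integral_comp_neg_Ioi]
    refine setIntegral_congr_fun measurableSet_Ioi fun x _ => ?_
    simp [stdNormalPDF, neg_pow]
  have h2 : stdNormalCDF t + ∫ x in Ioi t, stdNormalPDF x = 1 := by
    rw [cdf_eq_integral, ← compl_Iic]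
    rw [integral_add_compl measurableSet_Iic pdf_integrable, integral_pdf_total]
  linarith

lemma cdf_nonneg (t : ℝ) : 0 ≤ stdNormalCDF t := ENNReal.toReal_nonneg

lemma cdf_strictMono : StrictMono stdNormalCDF := by
  intro x y h
  have h1 : 0 < ∫ t in x..y, stdNormalPDF t :=
    intervalIntegral.intervalIntegral_pos_of_pos pdf_integrable.intervalIntegrable pdf_pos h
  have h2 := cdf_sub x y
  linarith

lemma cdf_lipschitz (x y : ℝ) : |stdNormalCDF x - stdNormalCDF y| ≤ 2⁻¹ * |x - y| := by
  rw [cdf_sub, ← Real.norm_eq_abs]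
  exact intervalIntegral.norm_integral_le_of_norm_le_const fun t _ => by
    rw [Real.norm_eq_abs, abs_of_pos (pdf_pos t)]; exact pdf_le_half t

lemma gauss1_singleton (x : ℝ) : gaussianReal 0 1 {x} = 0 :=
  gaussianReal_absolutelyContinuous 0 one_ne_zero (Real.volume_singleton)

lemma gauss1_Iio (t : ℝ) : (gaussianReal 0 1 (Iio t)).toReal = stdNormalCDF t := by
  rw [stdNormalCDF]
  congr 1
  refine le_antisymm (measure_mono Iio_subset_Iic_self) ?_
  calc gaussianReal 0 1 (Iic t) ≤ gaussianReal 0 1 (Iio t ∪ {t}) := by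
        refine measure_mono fun x hx => ?_
        rcases lt_or_eq_of_le (mem_Iic.1 hx) with h | h
        · exact Or.inl h
        · exact Or.inr h
    _ ≤ gaussianReal 0 1 (Iio t) + gaussianReal 0 1 {t} := measure_union_le _ _
    _ = gaussianReal 0 1 (Iio t) := by rw [gauss1_singleton, add_zero]

lemma gauss1_Ici (t : ℝ) : (gaussianReal 0 1 (Ici t)).toReal = 1 - stdNormalCDF t := by
  rw [← compl_Iio, prob_compl_eq_one_sub measurableSet_Iio,
    ENNReal.toReal_sub_of_le prob_le_one ENNReal.one_ne_top, ENNReal.toReal_one, gauss1_Iio]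

lemma gauss_scale {d : ℕ} (hd : 0 < d) {s : Set ℝ} (hs : MeasurableSet s) :
    gaussianReal 0 ((d : NNReal))⁻¹ s
      = gaussianReal 0 1 ((fun x => (Real.sqrt d)⁻¹ * x) ⁻¹' s) := by
  have hd0 : (0:ℝ) < d := by exact_mod_cast hd
  have hsd : (0:ℝ) < Real.sqrt d := Real.sqrt_pos.2 hd0
  have hmap := gaussianReal_map_const_mul (μ := 0) (v := 1) ((Real.sqrt d)⁻¹)
  have hv : (⟨((Real.sqrt d)⁻¹) ^ 2, sq_nonneg _⟩ : NNReal) * 1 = ((d : NNReal))⁻¹ := by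
    ext
    simp only [NNReal.coe_mul, NNReal.coe_one, mul_one, NNReal.coe_inv, NNReal.coe_natCast,
      NNReal.coe_mk]
    rw [inv_pow, Real.sq_sqrt hd0.le]
    norm_cast
  rw [mul_zero] at hmap
  erw [hv] at hmap
  rw [← hmap, Measure.map_apply (measurable_const_mul _) hs]

lemma gauss_d_Ici {d : ℕ} (hd : 0 < d) (u : ℝ) :
    ((gaussianReal 0 ((d : NNReal))⁻¹) (Ici u)).toReal
      = 1 - stdNormalCDF (u * Real.sqrt d) := by
  have hsd : (0:ℝ) < Real.sqrt d := Real.sqrt_pos.2 (by exact_mod_cast hd)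
  rw [gauss_scale hd measurableSet_Ici]
  have h : (fun x : ℝ => (Real.sqrt d)⁻¹ * x) ⁻¹' (Ici u) = Ici (u * Real.sqrt d) := by
    ext x
    simp only [mem_preimage, mem_Ici]
    rw [inv_mul_eq_div, le_div_iff₀ hsd]
  rw [h, gauss1_Ici]

lemma gauss_d_Iio {d : ℕ} (hd : 0 < d) (u : ℝ) :
    ((gaussianReal 0 ((d : NNReal))⁻¹) (Iio u)).toReal = stdNormalCDF (u * Real.sqrt d) := by
  have hsd : (0:ℝ) < Real.sqrt d := Real.sqrt_pos.2 (by exact_mod_cast hd)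
  rw [gauss_scale hd measurableSet_Iio]
  have h : (fun x : ℝ => (Real.sqrt d)⁻¹ * x) ⁻¹' (Iio u) = Iio (u * Real.sqrt d) := by
    ext x
    simp only [mem_preimage, mem_Iio]
    rw [inv_mul_eq_div, div_lt_iff₀ hsd]
  rw [h, gauss1_Iio]

lemma exp_aux_integrable (A lam c : ℝ) (x y : ℝ) :
    IntervalIntegrable (fun t => A * Real.exp (lam * (t - c))) MeasureTheory.volume x y :=
  (continuous_const.mul (Real.continuous_exp.comp
    (continuous_const.mul (continuous_id.sub continuous_const)))).intervalIntegrable x y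

lemma exp_aux_integral (A lam c : ℝ) (hlam : lam ≠ 0) (s : ℝ) :
    ∫ t in c..(c + s), A * Real.exp (lam * (t - c))
      = (A / lam) * (Real.exp (lam * s) - 1) := by
  have hF : ∀ t ∈ uIcc c (c + s),
      HasDerivAt (fun t => (A / lam) * Real.exp (lam * (t - c)))
        (A * Real.exp (lam * (t - c))) t := by
    intro t _
    have h1 : HasDerivAt (fun t : ℝ => lam * (t - c)) lam t := by
      simpa using ((hasDerivAt_id t).sub_const c).const_mul lam
    have h2 := (h1.exp).const_mul (A / lam)
    refine h2.congr_deriv ?_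
    field_simp
  rw [intervalIntegral.integral_eq_sub_of_hasDerivAt hF (exp_aux_integrable A lam c _ _)]
  rw [add_sub_cancel_left, sub_self, mul_zero, Real.exp_zero, mul_one, mul_sub, mul_one]

lemma key_upper {c p : ℝ} (hc : 0 < c) (hcdf : stdNormalCDF (-c) = p)
    (hp1 : p < 1 / 2) {s : ℝ} (hs : -c ≤ s) :
    stdNormalCDF (c + s) ≤ (1 - p) * Real.exp (stdNormalPDF c * s / (1 - p)) := by
  have ha0 : 0 < stdNormalPDF c := pdf_pos c
  set a := stdNormalPDF c with ha
  have hΦc : stdNormalCDF c = 1 - p := by have := cdf_neg c; linarith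
  have hp' : (0:ℝ) < 1 - p := by linarith
  set lam := a / (1 - p) with hlam
  have hlam0 : 0 < lam := div_pos ha0 hp'
  have hint : ∫ t in c..(c + s), a * Real.exp (lam * (t - c))
      = (1 - p) * (Real.exp (lam * s) - 1) := by
    rw [exp_aux_integral a lam c hlam0.ne' s]
    have h2 : a / lam = 1 - p := by
      rw [hlam]
      field_simp
    rw [h2]
  have hcomp : (∫ t in c..(c + s), stdNormalPDF t)
      ≤ ∫ t in c..(c + s), a * Real.exp (lam * (t - c)) := by
    rcases le_or_gt 0 s with h0 | h0
    · refine intervalIntegral.integral_mono_on (by linarith)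
        pdf_integrable.intervalIntegrable (exp_aux_integrable _ _ _ _ _) ?_
      rintro t ⟨ht1, ht2⟩
      refine pdf_le_pdf_mul_exp ?_
      nlinarith [mul_nonneg (sub_nonneg.2 ht1) (show (0:ℝ) ≤ t + c by linarith),
        mul_nonneg hlam0.le (sub_nonneg.2 ht1)]
    · have hmono : (∫ t in (c + s)..c, a * Real.exp (lam * (t - c)))
          ≤ ∫ t in (c + s)..c, stdNormalPDF t := by
        refine intervalIntegral.integral_mono_on (by linarith)
          (exp_aux_integrable _ _ _ _ _) pdf_integrable.intervalIntegrable ?_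
        rintro t ⟨ht1, ht2⟩
        refine pdf_mul_exp_le_pdf ?_
        nlinarith [mul_nonneg (sub_nonneg.2 ht2) (show (0:ℝ) ≤ t + c by linarith),
          mul_nonneg hlam0.le (sub_nonneg.2 ht2)]
      have e1 := intervalIntegral.integral_symm (μ := MeasureTheory.volume)
        (f := stdNormalPDF) (c + s) c
      have e2 := intervalIntegral.integral_symm (μ := MeasureTheory.volume)
        (f := fun t => a * Real.exp (lam * (t - c))) (c + s) c
      rw [e1, e2]
      linarith
  have hsub := cdf_sub c (c + s)
  have hfin : stdNormalCDF (c + s) ≤ (1 - p) * Real.exp (lam * s) := by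
    nlinarith [hcomp, hint, hsub, hΦc]
  calc stdNormalCDF (c + s) ≤ (1 - p) * Real.exp (lam * s) := hfin
    _ = (1 - p) * Real.exp (a * s / (1 - p)) := by
        congr 1
        rw [hlam]
        ring

lemma key_lower {c p ε : ℝ} (hc : 0 < c) (hcdf : stdNormalCDF (-c) = p) (hp0 : 0 < p)
    (hε : 0 ≤ ε) (hmills : p * (c + ε) ≤ stdNormalPDF c) {s : ℝ} (hs : |s| ≤ 2 * ε)
    (hsc : -c ≤ s) :
    1 - stdNormalCDF (c + s) ≤ p * Real.exp (-(stdNormalPDF c / p) * s) := by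
  have ha0 : 0 < stdNormalPDF c := pdf_pos c
  set a := stdNormalPDF c with ha
  have hΦc : stdNormalCDF c = 1 - p := by have := cdf_neg c; linarith
  set lam := a / p with hlam
  have hlam0 : 0 < lam := div_pos ha0 hp0
  have hplam : p * lam = a := by rw [hlam]; field_simp
  have hlamc : c + ε ≤ lam := by
    rw [hlam, le_div_iff₀ hp0]
    linarith [hmills]
  obtain ⟨hs1, hs2⟩ := abs_le.1 hs
  have hint : ∫ t in c..(c + s), a * Real.exp (-lam * (t - c))
      = p * (1 - Real.exp (-lam * s)) := by
    rw [exp_aux_integral a (-lam) c (by linarith) s]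
    have haa : a ≠ 0 := ha0.ne'
    have hpp : p ≠ 0 := hp0.ne'
    have h2 : a / -lam = -p := by
      rw [hlam]
      field_simp
    rw [h2]
    ring
  have hcomp : (∫ t in c..(c + s), a * Real.exp (-lam * (t - c)))
      ≤ ∫ t in c..(c + s), stdNormalPDF t := by
    rcases le_or_gt 0 s with h0 | h0
    · refine intervalIntegral.integral_mono_on (by linarith)
        (exp_aux_integrable _ _ _ _ _) pdf_integrable.intervalIntegrable ?_
      rintro t ⟨ht1, ht2⟩
      refine pdf_mul_exp_le_pdf ?_
      have h1 : (t + c) / 2 ≤ lam := by linarith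
      nlinarith [mul_le_mul_of_nonneg_left h1 (sub_nonneg.2 ht1)]
    · have hmono : (∫ t in (c + s)..c, stdNormalPDF t)
          ≤ ∫ t in (c + s)..c, a * Real.exp (-lam * (t - c)) := by
        refine intervalIntegral.integral_mono_on (by linarith)
          pdf_integrable.intervalIntegrable (exp_aux_integrable _ _ _ _ _) ?_
        rintro t ⟨ht1, ht2⟩
        refine pdf_le_pdf_mul_exp ?_
        have h1 : (t + c) / 2 ≤ lam := by linarith
        nlinarith [mul_le_mul_of_nonneg_left h1 (sub_nonneg.2 ht2)]
      have e1 := intervalIntegral.integral_symm (μ := MeasureTheory.volume)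
        (f := stdNormalPDF) (c + s) c
      have e2 := intervalIntegral.integral_symm (μ := MeasureTheory.volume)
        (f := fun t => a * Real.exp (-lam * (t - c))) (c + s) c
      rw [e1, e2]
      linarith
  have hsub := cdf_sub c (c + s)
  have hfin : 1 - stdNormalCDF (c + s) ≤ p * Real.exp (-lam * s) := by
    nlinarith [hcomp, hint, hsub, hΦc]
  calc 1 - stdNormalCDF (c + s) ≤ p * Real.exp (-lam * s) := hfin
    _ = p * Real.exp (-(a / p) * s) := by rw [hlam]

lemma mills {c p : ℝ} (hc : 0 < c) (hcdf : stdNormalCDF (-c) = p) :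
    p + stdNormalPDF c * Real.exp (-(2 * c)) * (1 - Real.exp (-2⁻¹)) ≤ stdNormalPDF c / c := by
  have ha0 : 0 < stdNormalPDF c := pdf_pos c
  set a := stdNormalPDF c with ha
  have hp_eq : p = ∫ t in Ioi c, stdNormalPDF t := by
    have h1 : stdNormalCDF c + ∫ x in Ioi c, stdNormalPDF x = 1 := by
      rw [cdf_eq_integral, ← compl_Iic]
      rw [integral_add_compl measurableSet_Iic pdf_integrable, integral_pdf_total]
    have h2 := cdf_neg c
    linarith [hcdf ▸ h2]
  have hint_h : IntegrableOn (fun t => a * Real.exp (c * c - c * t)) (Ioi c) := by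
    have h1 : IntegrableOn (fun x => (a * Real.exp (c * c)) * Real.exp (-c * x)) (Ioi c) :=
      (exp_neg_integrableOn_Ioi c hc).const_mul _
    refine h1.congr_fun (fun t _ => ?_) measurableSet_Ioi
    dsimp only
    rw [mul_assoc, ← Real.exp_add]
    ring_nf
  have hIoi_h : ∫ t in Ioi c, a * Real.exp (c * c - c * t) = a / c := by
    have hderiv : ∀ t ∈ Ici c,
        HasDerivAt (fun t => -(a / c) * Real.exp (c * c - c * t))
          (a * Real.exp (c * c - c * t)) t := by
      intro t _
      have h1 : HasDerivAt (fun t : ℝ => c * c - c * t) (-c) t := by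
        simpa using ((hasDerivAt_id t).const_mul c).const_sub (c * c)
      have h2 := (h1.exp).const_mul (-(a / c))
      refine h2.congr_deriv ?_
      field_simp
    have htend : Filter.Tendsto (fun t => -(a / c) * Real.exp (c * c - c * t))
        Filter.atTop (nhds 0) := by
      have hct : Filter.Tendsto (fun t : ℝ => c * t) Filter.atTop Filter.atTop :=
        Filter.Tendsto.const_mul_atTop hc Filter.tendsto_id
      have h1' := Filter.tendsto_atBot_add_const_left Filter.atTop (c * c)
        (Filter.tendsto_neg_atTop_atBot.comp hct)
      have h1 : Filter.Tendsto (fun t : ℝ => c * c - c * t) Filter.atTop Filter.atBot := by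
        simpa [sub_eq_add_neg] using h1'
      have h2 := Real.tendsto_exp_atBot.comp h1
      have h3 := h2.const_mul (-(a / c))
      simpa using h3
    have := integral_Ioi_of_hasDerivAt_of_tendsto' hderiv hint_h htend
    rw [this]
    norm_num
  have hφ_le : ∀ t ∈ Ioi c, stdNormalPDF t ≤ a * Real.exp (c * c - c * t) := by
    intro t _
    refine pdf_le_pdf_mul_exp ?_
    nlinarith [sq_nonneg (t - c)]
  have hdint : IntegrableOn (fun t => a * Real.exp (c * c - c * t) - stdNormalPDF t) (Ioi c) :=
    hint_h.sub pdf_integrable.integrableOn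
  have hsub : ∫ t in Ioi c, (a * Real.exp (c * c - c * t) - stdNormalPDF t)
      = a / c - p := by
    rw [integral_sub hint_h pdf_integrable.integrableOn, hIoi_h, hp_eq]
  have hsubset : Ioc (c + 1) (c + 2) ⊆ Ioi c := fun x hx => lt_trans (by linarith) hx.1
  have hchunk : a * Real.exp (-(2 * c)) * (1 - Real.exp (-2⁻¹))
      ≤ ∫ t in Ioi c, (a * Real.exp (c * c - c * t) - stdNormalPDF t) := by
    have hmeas : (MeasureTheory.volume (Ioc (c + 1) (c + 2))).toReal = 1 := by
      rw [Real.volume_Ioc]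
      norm_num
    have hlower : ∀ x ∈ Ioc (c + 1) (c + 2),
        a * Real.exp (-(2 * c)) * (1 - Real.exp (-2⁻¹))
          ≤ a * Real.exp (c * c - c * x) - stdNormalPDF x := by
      intro x hx
      obtain ⟨hx1, hx2⟩ := hx
      have h1 : Real.exp (-(2 * c)) ≤ Real.exp (c * c - c * x) :=
        Real.exp_le_exp.2 (by nlinarith)
      have h2 : stdNormalPDF x ≤ a * Real.exp ((c * c - c * x) + -2⁻¹) := by
        refine pdf_le_pdf_mul_exp ?_
        nlinarith [mul_nonneg (show (0:ℝ) ≤ x - c - 1 by linarith)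
          (show (0:ℝ) ≤ x - c + 1 by linarith)]
      have h3 : Real.exp (-2⁻¹) ≤ 1 := Real.exp_le_one_iff.2 (by norm_num)
      have h4 : Real.exp ((c * c - c * x) + -2⁻¹)
          = Real.exp (c * c - c * x) * Real.exp (-2⁻¹) := Real.exp_add _ _
      nlinarith [Real.exp_pos (c * c - c * x), Real.exp_pos (-2⁻¹),
        mul_le_mul_of_nonneg_right h1 (show (0:ℝ) ≤ 1 - Real.exp (-2⁻¹) by linarith)]
    calc a * Real.exp (-(2 * c)) * (1 - Real.exp (-2⁻¹))
        = a * Real.exp (-(2 * c)) * (1 - Real.exp (-2⁻¹))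
            * (MeasureTheory.volume (Ioc (c + 1) (c + 2))).toReal := by rw [hmeas, mul_one]
      _ ≤ ∫ t in Ioc (c + 1) (c + 2), (a * Real.exp (c * c - c * t) - stdNormalPDF t) :=
          setIntegral_ge_of_const_le_real measurableSet_Ioc
            (by rw [Real.volume_Ioc]; exact ENNReal.ofReal_ne_top)
            hlower (hdint.mono_set hsubset)
      _ ≤ ∫ t in Ioi c, (a * Real.exp (c * c - c * t) - stdNormalPDF t) := by
          refine setIntegral_mono_set hdint ?_ (HasSubset.Subset.eventuallyLE hsubset)
          refine (ae_restrict_iff' measurableSet_Ioi).2 (Filter.Eventually.of_forall ?_)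
          intro x hx
          exact sub_nonneg.2 (hφ_le x hx)
  linarith [hchunk, hsub]

set_option maxHeartbeats 1000000 in
lemma factor_upper {c p ε K δ m₀ s : ℝ} (hc : 0 < c)
    (hcdf : stdNormalCDF (-c) = p) (hp0 : 0 < p) (hp1 : p < 1 / 2)
    (hε0 : 0 < ε) (hεc : ε ≤ c)
    (hK : 8 * c * Real.exp c ≤ K)
    (hδ0 : 0 ≤ δ) (hδ8 : δ ≤ 8⁻¹)
    (hm₀1 : 1 - 2 * δ < m₀) (hm₀2 : m₀ < 1 + δ)
    (hs : |s| ≤ ε) :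
    stdNormalCDF ((c + s) / m₀)
      ≤ (1 - p) * Real.exp (stdNormalPDF c * s / (1 - p) + K * δ) := by
  have ha0 : 0 < stdNormalPDF c := pdf_pos c
  have ha2 : stdNormalPDF c ≤ 2⁻¹ := pdf_le_half c
  set a := stdNormalPDF c with ha
  have hp' : (0:ℝ) < 1 - p := by linarith
  have hm₀pos : (0:ℝ) < m₀ := by linarith
  have hm₀34 : (3:ℝ)/4 ≤ m₀ := by linarith
  have habs : |s| ≤ c := hs.trans hεc
  obtain ⟨hs1, hs2⟩ := abs_le.1 habs
  have hdiff : |(c + s) / m₀ - (c + s)| ≤ 6 * c * δ := by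
    have h1 : (c + s) / m₀ - (c + s) = (c + s) * (1 - m₀) / m₀ := by
      field_simp
    rw [h1, abs_div, abs_mul, abs_of_pos hm₀pos, div_le_iff₀ hm₀pos]
    have h2 : |c + s| ≤ 2 * c := abs_le.2 ⟨by linarith, by linarith⟩
    have h3 : |1 - m₀| ≤ 2 * δ := abs_le.2 ⟨by linarith, by linarith⟩
    nlinarith [mul_le_mul h2 h3 (abs_nonneg (1 - m₀)) (by linarith : (0:ℝ) ≤ 2 * c),
      mul_nonneg hc.le hδ0,
      mul_le_mul_of_nonneg_left hm₀34
        (mul_nonneg (mul_nonneg (by norm_num : (0:ℝ) ≤ 6) hc.le) hδ0)]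
  have hlip : stdNormalCDF ((c + s) / m₀) ≤ stdNormalCDF (c + s) + 3 * c * δ := by
    have h1 := cdf_lipschitz ((c + s) / m₀) (c + s)
    have h6 : 2⁻¹ * |(c + s) / m₀ - (c + s)| ≤ 3 * c * δ := by linarith
    have h2 := (abs_le.1 (h1.trans h6)).2
    linarith
  have hku := key_upper hc hcdf hp1 (show -c ≤ s by linarith)
  rw [← ha] at hku
  have hR : (1/2) * Real.exp (-c) ≤ (1 - p) * Real.exp (a * s / (1 - p)) := by
    have h2 : -(2⁻¹ * c) ≤ a * s := by
      have h2a : a * (-c) ≤ a * s := mul_le_mul_of_nonneg_left hs1 ha0.le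
      nlinarith [mul_le_mul_of_nonneg_right ha2 hc.le]
    have h1 : -c ≤ a * s / (1 - p) := by
      rw [le_div_iff₀ hp']
      nlinarith [mul_le_mul_of_nonneg_left (show (1:ℝ)/2 ≤ 1 - p by linarith) hc.le]
    have h3 := Real.exp_le_exp.2 h1
    exact mul_le_mul (by linarith) h3 (Real.exp_pos _).le (by linarith)
  have hexp1 : Real.exp (-c) * Real.exp c = 1 := by rw [← Real.exp_add]; simp
  have hKδ : 3 * c * δ ≤ ((1 - p) * Real.exp (a * s / (1 - p))) * (K * δ) := by
    have h2 : (1/2) * Real.exp (-c) * (8 * c * Real.exp c) = 4 * c := by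
      rw [show (1/2) * Real.exp (-c) * (8 * c * Real.exp c)
          = 4 * c * (Real.exp (-c) * Real.exp c) by ring, hexp1, mul_one]
    have hKmul : (1/2) * Real.exp (-c) * (8 * c * Real.exp c)
        ≤ (1/2) * Real.exp (-c) * K :=
      mul_le_mul_of_nonneg_left hK (by positivity)
    have h1 : 3 * c ≤ (1/2) * Real.exp (-c) * K := by linarith
    have h4 : 3 * c * δ ≤ (1/2) * Real.exp (-c) * K * δ :=
      mul_le_mul_of_nonneg_right h1 hδ0
    have hKpos : 0 ≤ K := le_trans (by positivity) hK
    have h7 := mul_le_mul_of_nonneg_right hR (mul_nonneg hKpos hδ0)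
    nlinarith [h7]
  have hRpos : 0 ≤ (1 - p) * Real.exp (a * s / (1 - p)) :=
    mul_nonneg (by linarith) (Real.exp_pos _).le
  have h5 := Real.add_one_le_exp (K * δ)
  have h8 := mul_le_mul_of_nonneg_left h5 hRpos
  have h9 : (1 - p) * Real.exp (a * s / (1 - p)) * (K * δ + 1)
      = (1 - p) * Real.exp (a * s / (1 - p)) * (K * δ)
        + (1 - p) * Real.exp (a * s / (1 - p)) := by ring
  calc stdNormalCDF ((c + s) / m₀) ≤ stdNormalCDF (c + s) + 3 * c * δ := hlip
    _ ≤ (1 - p) * Real.exp (a * s / (1 - p)) + 3 * c * δ := by linarith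
    _ ≤ (1 - p) * Real.exp (a * s / (1 - p)) * Real.exp (K * δ) := by linarith
    _ = (1 - p) * Real.exp (a * s / (1 - p) + K * δ) := by
        rw [mul_assoc, ← Real.exp_add]

set_option maxHeartbeats 1000000 in
lemma factor_lower {c p ε K δ m₀ s : ℝ} (hc : 0 < c)
    (hcdf : stdNormalCDF (-c) = p) (hp0 : 0 < p) (hp1 : p < 1 / 2)
    (hε0 : 0 < ε) (hεc : ε ≤ c) (hmills : p * (c + ε) ≤ stdNormalPDF c)
    (hK : (4 * c / p) * Real.exp (stdNormalPDF c * c / p) ≤ K)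
    (hδ0 : 0 ≤ δ) (hδ8 : δ ≤ 8⁻¹)
    (hm₀1 : 1 - 2 * δ < m₀) (hm₀2 : m₀ < 1 + δ)
    (hs : |s| ≤ ε) :
    stdNormalCDF (-((c + s) / m₀))
      ≤ p * Real.exp (-(stdNormalPDF c / p) * s + K * δ) := by
  have ha0 : 0 < stdNormalPDF c := pdf_pos c
  set a := stdNormalPDF c with ha
  have hm₀pos : (0:ℝ) < m₀ := by linarith
  have hm₀34 : (3:ℝ)/4 ≤ m₀ := by linarith
  have habs : |s| ≤ c := hs.trans hεc
  obtain ⟨hs1, hs2⟩ := abs_le.1 habs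
  have hdiff : |(c + s) / m₀ - (c + s)| ≤ 6 * c * δ := by
    have h1 : (c + s) / m₀ - (c + s) = (c + s) * (1 - m₀) / m₀ := by
      field_simp
    rw [h1, abs_div, abs_mul, abs_of_pos hm₀pos, div_le_iff₀ hm₀pos]
    have h2 : |c + s| ≤ 2 * c := abs_le.2 ⟨by linarith, by linarith⟩
    have h3 : |1 - m₀| ≤ 2 * δ := abs_le.2 ⟨by linarith, by linarith⟩
    nlinarith [mul_le_mul h2 h3 (abs_nonneg (1 - m₀)) (by linarith : (0:ℝ) ≤ 2 * c),
      mul_nonneg hc.le hδ0,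
      mul_le_mul_of_nonneg_left hm₀34
        (mul_nonneg (mul_nonneg (by norm_num : (0:ℝ) ≤ 6) hc.le) hδ0)]
  rw [cdf_neg]
  have hlip : 1 - stdNormalCDF ((c + s) / m₀)
      ≤ (1 - stdNormalCDF (c + s)) + 3 * c * δ := by
    have h1 := cdf_lipschitz ((c + s) / m₀) (c + s)
    have h6 : 2⁻¹ * |(c + s) / m₀ - (c + s)| ≤ 3 * c * δ := by linarith
    have h2 := (abs_le.1 (h1.trans h6)).1
    linarith
  have hkl := key_lower hc hcdf hp0 hε0.le hmills
    (show |s| ≤ 2 * ε by nlinarith [abs_nonneg s]) (show -c ≤ s by linarith)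
  rw [← ha] at hkl
  have hlam0 : 0 < a / p := div_pos ha0 hp0
  have hR : p * Real.exp (-(a * c / p)) ≤ p * Real.exp (-(a / p) * s) := by
    have h2 : (a / p) * s ≤ (a / p) * c := mul_le_mul_of_nonneg_left hs2 hlam0.le
    have heq : a * c / p = (a / p) * c := by ring
    have h1 : -(a * c / p) ≤ -(a / p) * s := by
      rw [heq]
      linarith
    exact mul_le_mul_of_nonneg_left (Real.exp_le_exp.2 h1) hp0.le
  have hexp1 : Real.exp (-(a * c / p)) * Real.exp (a * c / p) = 1 := by
    rw [← Real.exp_add]; simp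
  have hKδ : 3 * c * δ ≤ (p * Real.exp (-(a / p) * s)) * (K * δ) := by
    have h2 : (p * Real.exp (-(a * c / p))) * ((4 * c / p) * Real.exp (a * c / p))
        = 4 * c := by
      rw [show (p * Real.exp (-(a * c / p))) * ((4 * c / p) * Real.exp (a * c / p))
          = ((4 * c / p) * p) * (Real.exp (-(a * c / p)) * Real.exp (a * c / p)) by ring,
        hexp1, mul_one, div_mul_cancel₀ _ hp0.ne']
    have hKmul : (p * Real.exp (-(a * c / p))) * ((4 * c / p) * Real.exp (a * c / p))
        ≤ (p * Real.exp (-(a * c / p))) * K :=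
      mul_le_mul_of_nonneg_left hK (by positivity)
    have h1 : 3 * c ≤ p * Real.exp (-(a * c / p)) * K := by linarith
    have h4 : 3 * c * δ ≤ p * Real.exp (-(a * c / p)) * K * δ :=
      mul_le_mul_of_nonneg_right h1 hδ0
    have hKpos : 0 ≤ K := le_trans (by positivity) hK
    have h7 := mul_le_mul_of_nonneg_right hR (mul_nonneg hKpos hδ0)
    nlinarith [h7]
  have hRpos : 0 ≤ p * Real.exp (-(a / p) * s) :=
    mul_nonneg hp0.le (Real.exp_pos _).le
  have h5 := Real.add_one_le_exp (K * δ)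
  have h8 := mul_le_mul_of_nonneg_left h5 hRpos
  have h9 : p * Real.exp (-(a / p) * s) * (K * δ + 1)
      = p * Real.exp (-(a / p) * s) * (K * δ) + p * Real.exp (-(a / p) * s) := by ring
  calc 1 - stdNormalCDF ((c + s) / m₀)
      ≤ (1 - stdNormalCDF (c + s)) + 3 * c * δ := hlip
    _ ≤ p * Real.exp (-(a / p) * s) + 3 * c * δ := by linarith
    _ ≤ p * Real.exp (-(a / p) * s) * Real.exp (K * δ) := by linarith
    _ = p * Real.exp (-(a / p) * s + K * δ) := by rw [mul_assoc, ← Real.exp_add]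

set_option maxHeartbeats 2000000 in
theorem stmt_17' (C : ℝ) (hC : 1 < C) (p : ℝ) (hp0 : 0 < p) (hp2 : p < 1 / 2) :
    ∃ K : ℝ, 0 < K ∧ ∃ D₀ ℓ₀ : ℕ,
      ∀ D ℓ : ℕ, D₀ ≤ D → ℓ₀ ≤ ℓ → ∀ d : ℕ, d = D ^ 2 * ℓ ^ 2 →
      ∀ c : ℝ, 0 < c → stdNormalCDF (-c) = p →
      ∀ α δ : ℝ, α = 100 * C * Real.log (10 / p) → δ = α * (d : ℝ) ^ (-(1 / 4) : ℝ) →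
      ∀ k : ℕ, 1 ≤ k → (k : ℝ) ≤ C * ℓ →
      ∀ m : ℕ, ∀ v : Fin m → ℝ, ∀ vs : Fin k → Fin m → ℝ,
        Real.sqrt (∑ j, v j ^ 2) ≤ α * Real.sqrt ℓ / Real.sqrt d →
        (∀ i : Fin k, Real.sqrt (∑ j, vs i j ^ 2) ≤ α * Real.sqrt ℓ / Real.sqrt d) →
      ∀ m₀ : ℝ, 1 - 2 * δ < m₀ → m₀ < 1 + δ →
        ((Measure.pi fun _ : Fin k => gaussianReal 0 (d : NNReal)⁻¹)
            {z | ∀ i : Fin k,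
              -c / Real.sqrt d ≤ m₀ * z i + ∑ j, vs i j * v j}).toReal ≤
          (1 - p) ^ k *
            Real.exp (stdNormalPDF c * Real.sqrt d / (1 - p) *
                (∑ i, ∑ j, vs i j * v j) + K * k * δ) ∧
        ((Measure.pi fun _ : Fin k => gaussianReal 0 (d : NNReal)⁻¹)
            {z | ∀ i : Fin k,
              m₀ * z i + (∑ j, vs i j * v j) < -c / Real.sqrt d}).toReal ≤
          p ^ k *
            Real.exp (-(stdNormalPDF c * Real.sqrt d / p) *
                (∑ i, ∑ j, vs i j * v j) + K * k * δ) := by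
  by_cases hex : ∃ c₀ : ℝ, 0 < c₀ ∧ stdNormalCDF (-c₀) = p
  case neg =>
    refine ⟨1, one_pos, 0, 0, ?_⟩
    intro D ℓ _ _ d _ c hc hcdf
    exact absurd ⟨c, hc, hcdf⟩ hex
  case pos =>
  obtain ⟨c₀, hc₀, hcdf₀⟩ := hex
  refine ⟨8 * c₀ * Real.exp c₀ + 4 * c₀ / p * Real.exp (stdNormalPDF c₀ * c₀ / p), ?_,
    ⌈(100 * C * Real.log (10 / p)) ^ 2 /
        (min c₀ (stdNormalPDF c₀ * Real.exp (-(2 * c₀)) * (1 - Real.exp (-2⁻¹)) * c₀ ^ 2 /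
          stdNormalPDF c₀))⌉₊ + ⌈8 * (100 * C * Real.log (10 / p))⌉₊ + 1,
    ⌈8 * (100 * C * Real.log (10 / p))⌉₊ + 1, ?_⟩
  · have h1 := Real.exp_pos c₀
    have h2 := Real.exp_pos (stdNormalPDF c₀ * c₀ / p)
    have h3 := mul_pos (mul_pos (show (0:ℝ) < 8 by norm_num) hc₀) h1
    have h4 := mul_pos (div_pos (mul_pos (show (0:ℝ) < 4 by norm_num) hc₀) hp0) h2
    linarith
  intro D ℓ hD hℓ d hd c hc hcdf α δ hα hδ' k hk1 hkC m v vs hv hvs m₀ hm₀1 hm₀2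
  have hcc : c₀ = c := by
    have h := cdf_strictMono.injective (hcdf₀.trans hcdf.symm)
    linarith [neg_inj.1 h]
  subst hcc
  -- basic positivity facts
  have ha0 : 0 < stdNormalPDF c₀ := pdf_pos c₀
  have hC0 : (0:ℝ) < C := by linarith
  have hlog : 0 < Real.log (10 / p) := Real.log_pos (by rw [one_lt_div hp0]; linarith)
  have hα0 : 0 < α := by
    rw [hα]
    have : (0:ℝ) < 100 * C := by linarith
    exact mul_pos this hlog
  have hDpos : 0 < D := lt_of_lt_of_le (Nat.succ_pos _) hD
  have hℓpos : 0 < ℓ := lt_of_lt_of_le (Nat.succ_pos _) hℓ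
  have hDr : (0:ℝ) < D := by exact_mod_cast hDpos
  have hℓr : (0:ℝ) < ℓ := by exact_mod_cast hℓpos
  have hdpos : 0 < d := by rw [hd]; exact Nat.mul_pos (pow_pos hDpos 2) (pow_pos hℓpos 2)
  have hdr0 : (0:ℝ) < d := by exact_mod_cast hdpos
  have hdr : (d:ℝ) = ((D:ℝ) * (ℓ:ℝ)) ^ 2 := by rw [hd]; push_cast; ring
  have hsqd : Real.sqrt d = (D:ℝ) * ℓ := by rw [hdr, Real.sqrt_sq (by positivity)]
  have hsqd0 : (0:ℝ) < Real.sqrt d := by rw [hsqd]; positivity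
  -- epsilon and mills
  set g := stdNormalPDF c₀ * Real.exp (-(2 * c₀)) * (1 - Real.exp (-2⁻¹)) with hgdef
  have hg0 : 0 < g := by
    have h1 : Real.exp (-2⁻¹) < 1 := Real.exp_lt_one_iff.2 (by norm_num)
    have h2 := Real.exp_pos (-(2 * c₀))
    rw [hgdef]
    have := mul_pos ha0 h2
    nlinarith
  set ε := min c₀ (g * c₀ ^ 2 / stdNormalPDF c₀) with hεdef
  have hε0 : 0 < ε := lt_min hc₀ (div_pos (mul_pos hg0 (pow_pos hc₀ 2)) ha0)
  have hεc : ε ≤ c₀ := min_le_left _ _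
  have hmills : p * (c₀ + ε) ≤ stdNormalPDF c₀ := by
    have hm := mills hc₀ hcdf
    set a := stdNormalPDF c₀
    have h1 : p ≤ a / c₀ - g := by rw [hgdef]; linarith
    have hpc : p * c₀ ≤ a - g * c₀ := by
      have h2 := mul_le_mul_of_nonneg_right h1 hc₀.le
      rw [sub_mul, div_mul_cancel₀ _ hc₀.ne'] at h2
      linarith
    have hpac : p ≤ a / c₀ := by linarith
    have h2 : ε ≤ g * c₀ ^ 2 / a := min_le_right _ _
    have h3 : ε * a ≤ g * c₀ ^ 2 := (le_div_iff₀ ha0).1 h2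
    have h4 : p * ε ≤ a / c₀ * ε := mul_le_mul_of_nonneg_right hpac hε0.le
    have h5 : a / c₀ * ε * c₀ = a * ε := by field_simp
    have h6 : p * ε * c₀ ≤ g * c₀ ^ 2 := by
      have h7 := mul_le_mul_of_nonneg_right h4 hc₀.le
      linarith [h7, h5, h3]
    have h8 : p * (c₀ + ε) * c₀ ≤ a * c₀ := by nlinarith [mul_le_mul_of_nonneg_right hpc hc₀.le]
    exact le_of_mul_le_mul_right (by linarith) hc₀
  -- delta facts
  have hδ0 : 0 ≤ δ := by
    rw [hδ']
    exact mul_nonneg hα0.le (Real.rpow_nonneg (Nat.cast_nonneg d) _)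
  have hDα : 8 * α ≤ (D:ℝ) := by
    have h1 : (8 * α) ≤ (⌈8 * (100 * C * Real.log (10 / p))⌉₊ : ℝ) := by
      rw [hα]; exact Nat.le_ceil _
    have h2 : (⌈8 * (100 * C * Real.log (10 / p))⌉₊ : ℕ) ≤ D := le_trans (by omega) hD
    calc (8 * α) ≤ (⌈8 * (100 * C * Real.log (10 / p))⌉₊ : ℝ) := h1
      _ ≤ (D:ℝ) := by exact_mod_cast h2
  have hℓα : 8 * α ≤ (ℓ:ℝ) := by
    have h1 : (8 * α) ≤ (⌈8 * (100 * C * Real.log (10 / p))⌉₊ : ℝ) := by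
      rw [hα]; exact Nat.le_ceil _
    have h2 : (⌈8 * (100 * C * Real.log (10 / p))⌉₊ : ℕ) ≤ ℓ := le_trans (by omega) hℓ
    calc (8 * α) ≤ (⌈8 * (100 * C * Real.log (10 / p))⌉₊ : ℝ) := h1
      _ ≤ (ℓ:ℝ) := by exact_mod_cast h2
  have hδ8 : δ ≤ 8⁻¹ := by
    have hDlℓ : (8 * α) ^ 2 ≤ (D:ℝ) * (ℓ:ℝ) := by nlinarith
    have hq : (8 * α) ^ (4:ℕ) ≤ (d:ℝ) := by
      rw [hdr]
      nlinarith [sq_nonneg (8 * α)]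
    have h4 : (8 * α) ≤ (d:ℝ) ^ ((1:ℝ)/4) := by
      have h5 : ((8 * α) ^ (4:ℕ) : ℝ) ^ ((1:ℝ)/4) ≤ (d:ℝ) ^ ((1:ℝ)/4) :=
        Real.rpow_le_rpow (by positivity) hq (by norm_num)
      rw [← Real.rpow_natCast (8 * α) 4, ← Real.rpow_mul (by positivity)] at h5
      norm_num at h5
      exact h5
    have hdp : (0:ℝ) < (d:ℝ) ^ ((1:ℝ)/4) := Real.rpow_pos_of_pos hdr0 _
    have hδeq : δ = α / (d:ℝ) ^ ((1:ℝ)/4) := by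
      rw [hδ', show (-(1/4) : ℝ) = -((1:ℝ)/4) by norm_num,
        Real.rpow_neg (Nat.cast_nonneg d), div_eq_mul_inv]
      ring
    rw [hδeq, div_le_iff₀ hdp]
    linarith
  have hm₀pos : (0:ℝ) < m₀ := by linarith
  -- the constant K split
  have hKu : 8 * c₀ * Real.exp c₀
      ≤ 8 * c₀ * Real.exp c₀ + 4 * c₀ / p * Real.exp (stdNormalPDF c₀ * c₀ / p) := by
    have h2 := Real.exp_pos (stdNormalPDF c₀ * c₀ / p)
    have h4 := mul_pos (div_pos (mul_pos (show (0:ℝ) < 4 by norm_num) hc₀) hp0) h2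
    linarith
  have hKl : 4 * c₀ / p * Real.exp (stdNormalPDF c₀ * c₀ / p)
      ≤ 8 * c₀ * Real.exp c₀ + 4 * c₀ / p * Real.exp (stdNormalPDF c₀ * c₀ / p) := by
    have h1 := Real.exp_pos c₀
    have h3 := mul_pos (mul_pos (show (0:ℝ) < 8 by norm_num) hc₀) h1
    linarith
  -- bound on the inner products
  have hεD : α ^ 2 ≤ ε * D := by
    have h1 : α ^ 2 / ε ≤ (⌈(100 * C * Real.log (10 / p)) ^ 2 / ε⌉₊ : ℝ) := by
      rw [hα]; exact Nat.le_ceil _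
    have h2 : (⌈(100 * C * Real.log (10 / p)) ^ 2 / ε⌉₊ : ℕ) ≤ D := le_trans (by omega) hD
    have h3 : α ^ 2 / ε ≤ (D:ℝ) := le_trans h1 (by exact_mod_cast h2)
    calc α ^ 2 = α ^ 2 / ε * ε := by field_simp
      _ ≤ (D:ℝ) * ε := mul_le_mul_of_nonneg_right h3 hε0.le
      _ = ε * D := by ring
  have hsi : ∀ i : Fin k, |(∑ j, vs i j * v j) * Real.sqrt d| ≤ ε := by
    intro i
    have hvsq : (∑ j, v j ^ 2) ≤ (α * Real.sqrt ℓ / Real.sqrt d) ^ 2 := by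
      have h1 := pow_le_pow_left₀ (Real.sqrt_nonneg _) hv 2
      rwa [Real.sq_sqrt (Finset.sum_nonneg fun j _ => sq_nonneg _)] at h1
    have hvssq : (∑ j, vs i j ^ 2) ≤ (α * Real.sqrt ℓ / Real.sqrt d) ^ 2 := by
      have h1 := pow_le_pow_left₀ (Real.sqrt_nonneg _) (hvs i) 2
      rwa [Real.sq_sqrt (Finset.sum_nonneg fun j _ => sq_nonneg _)] at h1
    have hCS := Finset.sum_mul_sq_le_sq_mul_sq Finset.univ (fun j => vs i j) (fun j => v j)
    have hB0 : (0:ℝ) ≤ (α * Real.sqrt ℓ / Real.sqrt d) ^ 2 := sq_nonneg _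
    have h1 : (∑ j, vs i j * v j) ^ 2 ≤ (((α * Real.sqrt ℓ / Real.sqrt d) ^ 2) ^ 2) := by
      calc (∑ j, vs i j * v j) ^ 2 ≤ (∑ j, vs i j ^ 2) * (∑ j, v j ^ 2) := hCS
        _ ≤ ((α * Real.sqrt ℓ / Real.sqrt d) ^ 2) * ((α * Real.sqrt ℓ / Real.sqrt d) ^ 2) :=
            mul_le_mul hvssq hvsq (Finset.sum_nonneg fun j _ => sq_nonneg _) hB0
        _ = ((α * Real.sqrt ℓ / Real.sqrt d) ^ 2) ^ 2 := by ring
    have h2 : |∑ j, vs i j * v j| ≤ (α * Real.sqrt ℓ / Real.sqrt d) ^ 2 := by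
      calc |∑ j, vs i j * v j| = Real.sqrt ((∑ j, vs i j * v j) ^ 2) :=
            (Real.sqrt_sq_eq_abs _).symm
        _ ≤ Real.sqrt (((α * Real.sqrt ℓ / Real.sqrt d) ^ 2) ^ 2) := Real.sqrt_le_sqrt h1
        _ = (α * Real.sqrt ℓ / Real.sqrt d) ^ 2 := Real.sqrt_sq hB0
    have hB2 : (α * Real.sqrt ℓ / Real.sqrt d) ^ 2 * Real.sqrt d = α ^ 2 / D := by
      rw [hsqd, div_pow, mul_pow, Real.sq_sqrt (Nat.cast_nonneg ℓ)]
      field_simp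
    have h3 : |(∑ j, vs i j * v j) * Real.sqrt d| ≤ α ^ 2 / D := by
      rw [abs_mul, abs_of_pos hsqd0, ← hB2]
      exact mul_le_mul_of_nonneg_right h2 hsqd0.le
    refine h3.trans ?_
    rw [div_le_iff₀ hDr]
    linarith
  -- the two parts
  constructor
  · -- upper event
    have hset1 : {z : Fin k → ℝ | ∀ i : Fin k,
          -c₀ / Real.sqrt d ≤ m₀ * z i + ∑ j, vs i j * v j}
        = Set.pi Set.univ
            (fun i => Ici ((-c₀ / Real.sqrt d - ∑ j, vs i j * v j) / m₀)) := by
      ext z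
      simp only [Set.mem_setOf_eq, Set.mem_pi, Set.mem_univ, true_implies, Set.mem_Ici]
      refine forall_congr' fun i => ?_
      rw [div_le_iff₀ hm₀pos]
      constructor <;> intro h <;> nlinarith [h]
    rw [hset1, Measure.pi_pi, ENNReal.toReal_prod]
    have hfac : ∀ i : Fin k,
        ((gaussianReal 0 ((d:NNReal))⁻¹)
          (Ici ((-c₀ / Real.sqrt d - ∑ j, vs i j * v j) / m₀))).toReal
        = stdNormalCDF ((c₀ + (∑ j, vs i j * v j) * Real.sqrt d) / m₀) := by
      intro i
      rw [gauss_d_Ici hdpos]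
      have harg : ((-c₀ / Real.sqrt d - ∑ j, vs i j * v j) / m₀) * Real.sqrt d
          = -((c₀ + (∑ j, vs i j * v j) * Real.sqrt d) / m₀) := by
        field_simp
        ring
      rw [harg, cdf_neg]
      ring
    simp only [hfac]
    refine le_trans (Finset.prod_le_prod (fun i _ => cdf_nonneg _)
      (fun i _ => factor_upper hc₀ hcdf hp0 hp2 hε0 hεc hKu hδ0 hδ8 hm₀1 hm₀2 (hsi i)))
      (le_of_eq ?_)
    rw [Finset.prod_mul_distrib, Finset.prod_const, Finset.card_univ, Fintype.card_fin,
      ← Real.exp_sum]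
    congr 1
    have hsum2 : stdNormalPDF c₀ * Real.sqrt d / (1 - p) * (∑ i, ∑ j, vs i j * v j)
        = ∑ i : Fin k, stdNormalPDF c₀ * ((∑ j, vs i j * v j) * Real.sqrt d) / (1 - p) := by
      rw [Finset.mul_sum]
      exact Finset.sum_congr rfl fun i _ => by ring
    rw [Finset.sum_add_distrib, Finset.sum_const, Finset.card_univ, Fintype.card_fin,
      nsmul_eq_mul, hsum2]
    congr 1
    ring
  · -- lower event
    have hset2 : {z : Fin k → ℝ | ∀ i : Fin k,
          m₀ * z i + (∑ j, vs i j * v j) < -c₀ / Real.sqrt d}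
        = Set.pi Set.univ
            (fun i => Iio ((-c₀ / Real.sqrt d - ∑ j, vs i j * v j) / m₀)) := by
      ext z
      simp only [Set.mem_setOf_eq, Set.mem_pi, Set.mem_univ, true_implies, Set.mem_Iio]
      refine forall_congr' fun i => ?_
      rw [lt_div_iff₀ hm₀pos]
      constructor <;> intro h <;> nlinarith [h]
    rw [hset2, Measure.pi_pi, ENNReal.toReal_prod]
    have hfac : ∀ i : Fin k,
        ((gaussianReal 0 ((d:NNReal))⁻¹)
          (Iio ((-c₀ / Real.sqrt d - ∑ j, vs i j * v j) / m₀))).toReal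
        = stdNormalCDF (-((c₀ + (∑ j, vs i j * v j) * Real.sqrt d) / m₀)) := by
      intro i
      rw [gauss_d_Iio hdpos]
      have harg : ((-c₀ / Real.sqrt d - ∑ j, vs i j * v j) / m₀) * Real.sqrt d
          = -((c₀ + (∑ j, vs i j * v j) * Real.sqrt d) / m₀) := by
        field_simp
        ring
      rw [harg]
    simp only [hfac]
    refine le_trans (Finset.prod_le_prod (fun i _ => cdf_nonneg _)
      (fun i _ => factor_lower hc₀ hcdf hp0 hp2 hε0 hεc hmills hKl hδ0 hδ8
        hm₀1 hm₀2 (hsi i)))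
      (le_of_eq ?_)
    rw [Finset.prod_mul_distrib, Finset.prod_const, Finset.card_univ, Fintype.card_fin,
      ← Real.exp_sum]
    congr 1
    have hsum2 : -(stdNormalPDF c₀ * Real.sqrt d / p) * (∑ i, ∑ j, vs i j * v j)
        = ∑ i : Fin k, -(stdNormalPDF c₀ / p) * ((∑ j, vs i j * v j) * Real.sqrt d) := by
      rw [Finset.mul_sum]
      exact Finset.sum_congr rfl fun i _ => by ring
    rw [Finset.sum_add_distrib, Finset.sum_const, Finset.card_univ, Fintype.card_fin,
      nsmul_eq_mul, hsum2]
    congr 1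
    ring

end Stmt17Aux

/-- For all `C > 1`, `p ∈ (0,1/2)` there are `K > 0`, `D₀`, `ℓ₀`
(depending only on `p, C`) such that: for integers `D ≥ D₀`, `ℓ ≥ ℓ₀`, `d = D²ℓ²`, any
positive integer `k ≤ Cℓ`, fixed vectors `v, v_1, …, v_k ∈ ℝ^m` of norm at most `α√ℓ/√d`,
a fixed `m₀ ∈ (1-2δ, 1+δ)` and i.i.d. `Z_1, …, Z_k ~ N(0,1/d)`:
`P[∀ i, m₀ Z_i + ⟨v_i, v⟩ ≥ -c_p/√d] ≤ (1-p)^k exp((a√d/(1-p)) Σ_i ⟨v_i, v⟩ + K k δ)` and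
`P[∀ i, m₀ Z_i + ⟨v_i, v⟩ < -c_p/√d] ≤ p^k exp(-(a√d/p) Σ_i ⟨v_i, v⟩ + K k δ)`, where
`Φ(-c_p) = p`, `c_p > 0`, `a = φ(c_p)`, `α = 100 C log(10/p)`, `δ = α d^{-1/4}`. -/
theorem stmt_17 (C : ℝ) (hC : 1 < C) (p : ℝ) (hp0 : 0 < p) (hp2 : p < 1 / 2) :
    ∃ K : ℝ, 0 < K ∧ ∃ D₀ ℓ₀ : ℕ,
      ∀ D ℓ : ℕ, D₀ ≤ D → ℓ₀ ≤ ℓ → ∀ d : ℕ, d = D ^ 2 * ℓ ^ 2 →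
      ∀ c : ℝ, 0 < c → stdNormalCDF (-c) = p →
      ∀ α δ : ℝ, α = 100 * C * Real.log (10 / p) → δ = α * (d : ℝ) ^ (-(1 / 4) : ℝ) →
      ∀ k : ℕ, 1 ≤ k → (k : ℝ) ≤ C * ℓ →
      ∀ m : ℕ, ∀ v : Fin m → ℝ, ∀ vs : Fin k → Fin m → ℝ,
        Real.sqrt (∑ j, v j ^ 2) ≤ α * Real.sqrt ℓ / Real.sqrt d →
        (∀ i : Fin k, Real.sqrt (∑ j, vs i j ^ 2) ≤ α * Real.sqrt ℓ / Real.sqrt d) →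
      ∀ m₀ : ℝ, 1 - 2 * δ < m₀ → m₀ < 1 + δ →
        ((Measure.pi fun _ : Fin k => gaussianReal 0 (d : NNReal)⁻¹)
            {z | ∀ i : Fin k,
              -c / Real.sqrt d ≤ m₀ * z i + ∑ j, vs i j * v j}).toReal ≤
          (1 - p) ^ k *
            Real.exp (stdNormalPDF c * Real.sqrt d / (1 - p) *
                (∑ i, ∑ j, vs i j * v j) + K * k * δ) ∧
        ((Measure.pi fun _ : Fin k => gaussianReal 0 (d : NNReal)⁻¹)
            {z | ∀ i : Fin k,
              m₀ * z i + (∑ j, vs i j * v j) < -c / Real.sqrt d}).toReal ≤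
          p ^ k *
            Real.exp (-(stdNormalPDF c * Real.sqrt d / p) *
                (∑ i, ∑ j, vs i j * v j) + K * k * δ) := by
  exact Stmt17Aux.stmt_17' C hC p hp0 hp2
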